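/- In a pre-abelian category, suppose f : A → B is a kernel and g : B → C is a cokernel with g ∘ f = 0 forming a kernel-cokernel pair. Then the morphisms (1,g)ᵀ : B → B ⊕ C and (1,0)ᵀ : B → B ⊕ C are both sections (split monomorphisms), and the pullback of (1,g)ᵀ along (1,0)ᵀ is given by the square with both pullback projections equal to f. -/

import Mathlib

open CategoryTheory CategoryTheory.Limits

universe v u

/-- In a pre-abelian category, given a kernel-cokernel pair `(f, g)`, the morphisms
`(1,g)ᵀ : B ⟶ B ⊞ C` and `(1,0)ᵀ : B ⟶ B ⊞ C` are sections (split monomorphisms), and the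
pullback of `(1,g)ᵀ` along `(1,0)ᵀ` is the square whose two projections are both `f`. -/
theorem stmt15 {𝒞 : Type u} [Category.{v} 𝒞] [Preadditive 𝒞] [HasFiniteBiproducts 𝒞] [HasBinaryBiproducts 𝒞]
    [HasKernels 𝒞] [HasCokernels 𝒞]
    {A B C : 𝒞} (f : A ⟶ B) (g : B ⟶ C) (w : f ≫ g = 0)
    (hker : IsLimit (KernelFork.ofι f w)) (hcoker : IsColimit (CokernelCofork.ofπ g w)) :
    IsSplitMono (biprod.lift (𝟙 B) g) ∧ IsSplitMono (biprod.lift (𝟙 B) (0 : B ⟶ C)) ∧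
    IsPullback f f (biprod.lift (𝟙 B) g) (biprod.lift (𝟙 B) (0 : B ⟶ C)) := by
  refine ⟨⟨⟨biprod.fst, by simp⟩⟩, ⟨⟨biprod.fst, by simp⟩⟩, ?_⟩
  have comm : f ≫ biprod.lift (𝟙 B) g = f ≫ biprod.lift (𝟙 B) (0 : B ⟶ C) := by
    ext <;> simp [w]
  refine ⟨⟨comm⟩, ⟨?_⟩⟩
  refine PullbackCone.IsLimit.mk comm
    (fun s => hker.lift (KernelFork.ofι s.fst (by
      have := s.condition
      have := congrArg (· ≫ biprod.snd) this
      simpa using this))) ?_ ?_ ?_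
  · intro s
    exact hker.fac _ WalkingParallelPair.zero
  · intro s
    have h1 : s.fst = s.snd := by
      have := congrArg (· ≫ biprod.fst) s.condition
      simpa using this
    refine Eq.trans ?_ h1
    exact hker.fac _ WalkingParallelPair.zero
  · intro s m hm _
    have hmono : Mono f := mono_of_isLimit_fork hker
    rw [← cancel_mono f, hm]
    exact (hker.fac (KernelFork.ofι s.fst _) WalkingParallelPair.zero).symm
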